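/- Let σ, τ ∈ {-1,+1}^V be arbitrary spin configurations and set r = (1−ε) + ε · max_{u∈V} ∑_{y∈V} tanh(β |J_{u,y}| / 2). Then there exists a coupling of P_{β,ε}(σ,·) and P_{β,ε}(τ,·), i.e. a probability distribution γ on pairs (η,η') ∈ {-1,+1}^V × {-1,+1}^V whose marginals are P_{β,ε}(σ,·) and P_{β,ε}(τ,·), such that ∑_{(η,η')} γ(η,η') · |{y ∈ V : η_y ≠ η'_y}| ≤ r · |{y ∈ V : σ_y ≠ τ_y}|. -/

import Mathlib

open Real Finset

variable {V : Type*}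

/-- The real value of a Boolean spin: `true ↦ +1`, `false ↦ -1`. -/
def sp (b : Bool) : ℝ := if b then 1 else -1

/-- The cavity field `h̃_x(σ) = ∑_y J_{x,y} σ_y + h_x`. -/
noncomputable def cavity [Fintype V] (J : V → V → ℝ) (h : V → ℝ) (σ : V → Bool) (x : V) : ℝ :=
  (∑ y, J x y * sp (σ y)) + h x

/-- The ε-SCA flip probability `p_x(σ) = e^{-(β/2) h̃_x(σ) σ_x} / (2 cosh((β/2) h̃_x(σ)))`. -/
noncomputable def flipProb [Fintype V] (J : V → V → ℝ) (h : V → ℝ) (β : ℝ)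
    (σ : V → Bool) (x : V) : ℝ :=
  Real.exp (-(β / 2) * cavity J h σ x * sp (σ x)) / (2 * Real.cosh ((β / 2) * cavity J h σ x))

/-- The ε-SCA transition kernel
`P_{β,ε}(σ,τ) = ∏_{x : τ_x = -σ_x} ε p_x(σ) · ∏_{y : τ_y = σ_y} (1 - ε p_y(σ))`. -/
noncomputable def Peps [Fintype V] [DecidableEq V] (J : V → V → ℝ) (h : V → ℝ) (β ε : ℝ)
    (σ τ : V → Bool) : ℝ :=
  (∏ x ∈ univ.filter (fun x => τ x ≠ σ x), ε * flipProb J h β σ x) *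
    ∏ y ∈ univ.filter (fun y => τ y = σ y), (1 - ε * flipProb J h β σ y)

set_option linter.unusedSectionVars false

section AnalyticAux


private lemma tanh_sub_tanh' (a b : ℝ) :
    Real.tanh a - Real.tanh b = Real.sinh (a - b) / (Real.cosh a * Real.cosh b) := by
  rw [Real.tanh_eq_sinh_div_cosh, Real.tanh_eq_sinh_div_cosh, Real.sinh_sub]
  field_simp [(Real.cosh_pos a).ne', (Real.cosh_pos b).ne']

private lemma tanh_mono' {a b : ℝ} (hab : a ≤ b) : Real.tanh a ≤ Real.tanh b := by
  have h := tanh_sub_tanh' b a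
  have hs : 0 ≤ Real.sinh (b - a) := by
    rw [← Real.sinh_zero]; exact Real.sinh_le_sinh.2 (by linarith)
  have := div_nonneg hs (le_of_lt (mul_pos (Real.cosh_pos b) (Real.cosh_pos a)))
  linarith

private lemma tanh_nonneg' {a : ℝ} (ha : 0 ≤ a) : 0 ≤ Real.tanh a := by
  have := tanh_mono' ha; rwa [Real.tanh_zero] at this

private lemma tanh_diff_le' {a b : ℝ} (hb : b ≤ a) :
    Real.tanh a - Real.tanh b ≤ 2 * Real.tanh ((a - b) / 2) := by
  set c := Real.cosh ((a - b) / 2) with hc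
  set s := Real.sinh ((a - b) / 2) with hs
  have hcpos : 0 < c := Real.cosh_pos _
  have hsnn : 0 ≤ s := by
    rw [hs, ← Real.sinh_zero]; exact Real.sinh_le_sinh.2 (by linarith)
  have hsinh : Real.sinh (a - b) = 2 * s * c := by
    rw [hs, hc, ← Real.sinh_two_mul]; ring_nf
  have hcoshab : Real.cosh (a - b) = 2 * c ^ 2 - 1 := by
    have h1 : Real.cosh (2 * ((a - b) / 2)) = c ^ 2 + Real.sinh ((a-b)/2) ^ 2 :=
      Real.cosh_two_mul _
    have h2 : Real.cosh ((a-b)/2) ^ 2 - Real.sinh ((a-b)/2) ^ 2 = 1 :=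
      Real.cosh_sq_sub_sinh_sq _
    have h3 : 2 * ((a - b) / 2) = a - b := by ring
    rw [h3] at h1; rw [h1]; nlinarith [h2]
  have hD : c ^ 2 ≤ Real.cosh a * Real.cosh b := by
    have h4 : Real.cosh (a + b) + Real.cosh (a - b) = 2 * (Real.cosh a * Real.cosh b) := by
      rw [Real.cosh_add, Real.cosh_sub]; ring
    nlinarith [Real.one_le_cosh (a + b)]
  have hDpos : 0 < Real.cosh a * Real.cosh b := mul_pos (Real.cosh_pos a) (Real.cosh_pos b)
  rw [tanh_sub_tanh', Real.tanh_eq_sinh_div_cosh, hsinh, div_le_iff₀ hDpos]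
  have key : 2 * (s / c) * (c ^ 2) ≤ 2 * (s / c) * (Real.cosh a * Real.cosh b) :=
    mul_le_mul_of_nonneg_left hD (by positivity)
  have : 2 * (s / c) * (c ^ 2) = 2 * s * c := by field_simp
  linarith

private lemma abs_tanh_sub_tanh' (a b : ℝ) :
    |Real.tanh a - Real.tanh b| ≤ 2 * Real.tanh (|a - b| / 2) := by
  rcases le_total b a with hab | hab
  · rw [abs_of_nonneg (sub_nonneg.2 hab), abs_of_nonneg (sub_nonneg.2 (tanh_mono' hab))]
    exact tanh_diff_le' hab
  · rw [abs_sub_comm a b, abs_sub_comm (Real.tanh a) (Real.tanh b),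
      abs_of_nonneg (sub_nonneg.2 hab), abs_of_nonneg (sub_nonneg.2 (tanh_mono' hab))]
    exact tanh_diff_le' hab

private lemma tanh_add_le' {x y : ℝ} (hx : 0 ≤ x) (hy : 0 ≤ y) :
    Real.tanh (x + y) ≤ Real.tanh x + Real.tanh y := by
  have h := tanh_sub_tanh' (x + y) x
  have h3 : x + y - x = y := by ring
  rw [h3] at h
  have hsy : 0 ≤ Real.sinh y := by
    rw [← Real.sinh_zero]; exact Real.sinh_le_sinh.2 hy
  have hcy : Real.cosh y ≤ Real.cosh (x + y) * Real.cosh x := by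
    have h1 : Real.cosh y ≤ Real.cosh (x + y) := by
      rw [Real.cosh_le_cosh, abs_of_nonneg hy, abs_of_nonneg (by linarith)]; linarith
    nlinarith [Real.one_le_cosh x, Real.cosh_pos (x + y)]
  have hty : Real.sinh y / (Real.cosh (x + y) * Real.cosh x) ≤ Real.tanh y := by
    rw [Real.tanh_eq_sinh_div_cosh]
    exact div_le_div_of_nonneg_left hsy (Real.cosh_pos y) hcy
  linarith

private lemma tanh_sum_le' {α : Type*} (s : Finset α) (f : α → ℝ) (hf : ∀ a ∈ s, 0 ≤ f a) :
    Real.tanh (∑ a ∈ s, f a) ≤ ∑ a ∈ s, Real.tanh (f a) := by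
  induction s using Finset.cons_induction with
  | empty => simp
  | cons a s ha ih =>
    rw [Finset.sum_cons, Finset.sum_cons]
    have h1 := tanh_add_le' (hf a (Finset.mem_cons_self a s))
      (Finset.sum_nonneg fun b hb => hf b (Finset.mem_cons_of_mem hb))
    have h2 := ih fun b hb => hf b (Finset.mem_cons_of_mem hb)
    linarith

end AnalyticAux

section Aux
variable [Fintype V] [DecidableEq V]

private lemma flipProb_eq (J : V → V → ℝ) (h : V → ℝ) (β : ℝ) (σ : V → Bool) (x : V) :
    flipProb J h β σ x = (1 - sp (σ x) * Real.tanh ((β / 2) * cavity J h σ x)) / 2 := by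
  unfold flipProb
  set a := (β / 2) * cavity J h σ x with ha
  have hc := (Real.cosh_pos a).ne'
  cases hb : σ x <;>
    simp only [sp, if_true, if_false, Bool.false_eq_true, Real.tanh_eq_sinh_div_cosh]
  · rw [show -(β / 2) * cavity J h σ x * (-1 : ℝ) = a from by rw [ha]; ring,
      ← Real.cosh_add_sinh]
    field_simp
    ring
  · rw [show -(β / 2) * cavity J h σ x * (1 : ℝ) = -a from by rw [ha]; ring,
      ← Real.cosh_sub_sinh]
    field_simp

private lemma abs_tanh_le_one (x : ℝ) : |Real.tanh x| ≤ 1 := by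
  rw [Real.tanh_eq_sinh_div_cosh, abs_div, abs_of_pos (Real.cosh_pos x),
    div_le_one (Real.cosh_pos x)]
  nlinarith [Real.cosh_sq_sub_sinh_sq x, abs_nonneg (Real.sinh x), sq_abs (Real.sinh x),
    Real.cosh_pos x]

private lemma flipProb_nonneg (J : V → V → ℝ) (h : V → ℝ) (β : ℝ) (σ : V → Bool) (x : V) :
    0 ≤ flipProb J h β σ x :=
  div_nonneg (Real.exp_pos _).le (by positivity)

private lemma flipProb_le_one (J : V → V → ℝ) (h : V → ℝ) (β : ℝ) (σ : V → Bool) (x : V) :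
    flipProb J h β σ x ≤ 1 := by
  rw [flipProb_eq]
  have h1 := abs_tanh_le_one ((β / 2) * cavity J h σ x)
  have h2 : |sp (σ x)| = 1 := by cases σ x <;> simp [sp]
  have h3 : |sp (σ x) * Real.tanh ((β / 2) * cavity J h σ x)| ≤ 1 := by
    rw [abs_mul, h2, one_mul]; exact h1
  rw [abs_le] at h3
  linarith [h3.1]

/-- one-site new-spin distribution -/
noncomputable def qf (J : V → V → ℝ) (h : V → ℝ) (β ε : ℝ) (σ : V → Bool) (x : V)
    (b : Bool) : ℝ :=
  if b = σ x then 1 - ε * flipProb J h β σ x else ε * flipProb J h β σ x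

private lemma qf_nonneg (J : V → V → ℝ) (h : V → ℝ) (β : ℝ) {ε : ℝ}
    (hε : ε ∈ Set.Ioc (0:ℝ) 1) (σ : V → Bool) (x : V) (b : Bool) :
    0 ≤ qf J h β ε σ x b := by
  have h0 := flipProb_nonneg J h β σ x
  have h1 := flipProb_le_one J h β σ x
  have hε0 := hε.1; have hε1 := hε.2
  unfold qf
  split
  · nlinarith
  · positivity

private lemma qf_sum (J : V → V → ℝ) (h : V → ℝ) (β ε : ℝ) (σ : V → Bool) (x : V) :
    qf J h β ε σ x true + qf J h β ε σ x false = 1 := by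
  unfold qf; cases hb : σ x <;> simp [hb]

private lemma qf_true (J : V → V → ℝ) (h : V → ℝ) (β ε : ℝ) (σ : V → Bool) (x : V) :
    qf J h β ε σ x true =
      (1 - ε) * (if σ x then 1 else 0)
        + ε * ((1 + Real.tanh ((β / 2) * cavity J h σ x)) / 2) := by
  unfold qf
  rw [flipProb_eq]
  cases hb : σ x <;> simp [hb, sp] <;> ring

private lemma Peps_eq_prod (J : V → V → ℝ) (h : V → ℝ) (β ε : ℝ) (σ η : V → Bool) :
    Peps J h β ε σ η = ∏ x, qf J h β ε σ x (η x) := by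
  rw [← Finset.prod_filter_mul_prod_filter_not univ (fun x => η x = σ x)
      (fun x => qf J h β ε σ x (η x))]
  unfold Peps
  rw [mul_comm]
  congr 1
  · exact Finset.prod_congr rfl fun x hx => by
      simp only [Finset.mem_filter] at hx; simp [qf, hx.2]
  · refine Finset.prod_congr (by simp) fun x hx => ?_
    simp only [Finset.mem_filter] at hx; simp [qf, hx.2]

/-- two-point maximal coupling -/
noncomputable def cpl (μ ν : Bool → ℝ) : Bool × Bool → ℝ
  | (true, true) => min (μ true) (ν true)
  | (false, false) => min (μ false) (ν false)
  | (true, false) => max (μ true - ν true) 0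
  | (false, true) => max (ν true - μ true) 0

private lemma cpl_nonneg (μ ν : Bool → ℝ) (hμ : ∀ b, 0 ≤ μ b) (hν : ∀ b, 0 ≤ ν b)
    (p : Bool × Bool) : 0 ≤ cpl μ ν p := by
  rcases p with ⟨a, b⟩
  cases a <;> cases b <;>
    first
      | exact le_min (hμ _) (hν _)
      | exact le_max_right _ _

private lemma cpl_row (μ ν : Bool → ℝ) (hμ1 : μ true + μ false = 1)
    (hν1 : ν true + ν false = 1) (a : Bool) :
    (∑ b : Bool, cpl μ ν (a, b)) = μ a := by
  rw [Fintype.sum_bool]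
  rcases le_total (μ true) (ν true) with hle | hle <;> cases a <;> simp only [cpl]
  · rw [max_eq_left (by linarith), min_eq_right (by linarith)]; linarith
  · rw [min_eq_left hle, max_eq_right (by linarith)]; ring
  · rw [max_eq_right (by linarith), min_eq_left (by linarith)]; ring
  · rw [min_eq_right hle, max_eq_left (by linarith)]; ring

private lemma cpl_col (μ ν : Bool → ℝ) (hμ1 : μ true + μ false = 1)
    (hν1 : ν true + ν false = 1) (a : Bool) :
    (∑ b : Bool, cpl μ ν (b, a)) = ν a := by
  rw [Fintype.sum_bool]
  rcases le_total (μ true) (ν true) with hle | hle <;> cases a <;> simp only [cpl]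
  · rw [max_eq_right (by linarith), min_eq_right (by linarith)]; linarith
  · rw [min_eq_left hle, max_eq_left (by linarith)]; ring
  · rw [max_eq_left (by linarith), min_eq_left (by linarith)]; linarith
  · rw [min_eq_right hle, max_eq_right (by linarith)]; ring

private lemma cpl_dis (μ ν : Bool → ℝ) :
    cpl μ ν (true, false) + cpl μ ν (false, true) = |μ true - ν true| := by
  simp only [cpl]
  rcases le_total (μ true) (ν true) with hle | hle
  · rw [abs_of_nonpos (by linarith), max_eq_right (by linarith), max_eq_left (by linarith)]
    ring
  · rw [abs_of_nonneg (by linarith), max_eq_left (by linarith), max_eq_right (by linarith)]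
    ring

private lemma cpl_total (μ ν : Bool → ℝ) (hμ1 : μ true + μ false = 1)
    (hν1 : ν true + ν false = 1) :
    (∑ q : Bool × Bool, cpl μ ν q) = 1 := by
  rw [Fintype.sum_prod_type]
  have : ∀ a, (∑ b : Bool, cpl μ ν (a, b)) = μ a := cpl_row μ ν hμ1 hν1
  simp only [this]
  rw [Fintype.sum_bool, hμ1]


private lemma tv_bound (J : V → V → ℝ) (h : V → ℝ) {β : ℝ} (hβ : 0 ≤ β) {ε : ℝ}
    (hε : ε ∈ Set.Ioc (0:ℝ) 1) (σ τ : V → Bool) (x : V) :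
    |qf J h β ε σ x true - qf J h β ε τ x true| ≤
      (1 - ε) * (if σ x = τ x then 0 else 1)
        + ε * ∑ z ∈ univ.filter (fun z => σ z ≠ τ z), Real.tanh (β * |J x z| / 2) := by
  obtain ⟨hε0, hε1⟩ := hε
  set D := univ.filter (fun z => σ z ≠ τ z) with hD
  set aσ := (β / 2) * cavity J h σ x with haσ
  set aτ := (β / 2) * cavity J h τ x with haτ
  rw [qf_true, qf_true, ← haσ, ← haτ]
  have e1 : (1 - ε) * (if σ x then (1:ℝ) else 0) + ε * ((1 + Real.tanh aσ) / 2)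
      - ((1 - ε) * (if τ x then 1 else 0) + ε * ((1 + Real.tanh aτ) / 2))
      = (1 - ε) * ((if σ x then 1 else 0) - (if τ x then 1 else 0))
        + (ε / 2) * (Real.tanh aσ - Real.tanh aτ) := by ring
  rw [e1]
  have hind : |(if σ x then (1:ℝ) else 0) - (if τ x then 1 else 0)|
      = (if σ x = τ x then 0 else 1) := by
    cases hσ : σ x <;> cases hτ : τ x <;> norm_num
  have h2 : |Real.tanh aσ - Real.tanh aτ| ≤ 2 * Real.tanh (|aσ - aτ| / 2) :=
    abs_tanh_sub_tanh' _ _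
  have hcav : cavity J h σ x - cavity J h τ x = ∑ z, J x z * (sp (σ z) - sp (τ z)) := by
    have e2 : ∑ z, J x z * (sp (σ z) - sp (τ z))
        = (∑ z, J x z * sp (σ z)) - ∑ z, J x z * sp (τ z) := by
      rw [← Finset.sum_sub_distrib]
      exact Finset.sum_congr rfl fun z _ => by ring
    unfold cavity; rw [e2]; ring
  have habs : |aσ - aτ| / 2 ≤ ∑ z ∈ D, β * |J x z| / 2 := by
    have h4 : aσ - aτ = (β / 2) * (cavity J h σ x - cavity J h τ x) := by
      rw [haσ, haτ]; ring
    rw [h4, hcav, abs_mul, abs_of_nonneg (by positivity : (0:ℝ) ≤ β / 2)]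
    have h5 : |∑ z, J x z * (sp (σ z) - sp (τ z))| ≤ ∑ z ∈ D, 2 * |J x z| := by
      calc |∑ z, J x z * (sp (σ z) - sp (τ z))|
          ≤ ∑ z, |J x z * (sp (σ z) - sp (τ z))| := Finset.abs_sum_le_sum_abs _ _
        _ = ∑ z ∈ D, |J x z * (sp (σ z) - sp (τ z))| := by
            refine (Finset.sum_filter_of_ne fun z _ hz => ?_).symm
            intro heq
            apply hz
            rw [heq]
            simp
        _ ≤ ∑ z ∈ D, 2 * |J x z| := by
            refine Finset.sum_le_sum fun z hz => ?_
            rw [abs_mul]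
            have hsp : |sp (σ z) - sp (τ z)| ≤ 2 := by
              cases σ z <;> cases τ z <;> norm_num [sp]
            nlinarith [abs_nonneg (J x z), abs_nonneg (sp (σ z) - sp (τ z))]
    calc β / 2 * |∑ z, J x z * (sp (σ z) - sp (τ z))| / 2
        ≤ β / 2 * (∑ z ∈ D, 2 * |J x z|) / 2 := by
          have := mul_le_mul_of_nonneg_left h5 (by positivity : (0:ℝ) ≤ β / 2)
          linarith
      _ = ∑ z ∈ D, β * |J x z| / 2 := by
          rw [Finset.mul_sum, Finset.sum_div]
          exact Finset.sum_congr rfl fun z _ => by ring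
  have h6 : Real.tanh (|aσ - aτ| / 2) ≤ ∑ z ∈ D, Real.tanh (β * |J x z| / 2) :=
    le_trans (tanh_mono' habs) (tanh_sum_le' _ _ fun z _ => by positivity)
  calc |(1 - ε) * ((if σ x then (1:ℝ) else 0) - (if τ x then 1 else 0))
        + (ε / 2) * (Real.tanh aσ - Real.tanh aτ)|
      ≤ |(1 - ε) * ((if σ x then (1:ℝ) else 0) - (if τ x then 1 else 0))|
        + |(ε / 2) * (Real.tanh aσ - Real.tanh aτ)| := abs_add_le _ _
    _ = (1 - ε) * (if σ x = τ x then 0 else 1)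
        + (ε / 2) * |Real.tanh aσ - Real.tanh aτ| := by
        rw [abs_mul, abs_mul, hind, abs_of_nonneg (by linarith : (0:ℝ) ≤ 1 - ε),
          abs_of_nonneg (by linarith : (0:ℝ) ≤ ε / 2)]
    _ ≤ (1 - ε) * (if σ x = τ x then 0 else 1)
        + ε * ∑ z ∈ D, Real.tanh (β * |J x z| / 2) := by nlinarith

end Aux

/-- with `r = (1−ε) + ε·max_u ∑_y tanh(β|J_{u,y}|/2)`, for arbitrary
configurations σ, τ there exists a coupling γ of `P_{β,ε}(σ,·)` and `P_{β,ε}(τ,·)` whose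
expected Hamming distance is at most `r · |{y : σ_y ≠ τ_y}|`. -/
theorem epsSCA_coupling_general [Fintype V] [DecidableEq V] [Nonempty V]
    (G : SimpleGraph V) (J : V → V → ℝ) (h : V → ℝ)
    (hsym : ∀ x y, J x y = J y x)
    (hJG : ∀ x y, ¬ G.Adj x y → J x y = 0)
    (β : ℝ) (hβ : 0 ≤ β) (ε : ℝ) (hε : ε ∈ Set.Ioc (0 : ℝ) 1)
    (σ τ : V → Bool) :
    ∃ γ : (V → Bool) × (V → Bool) → ℝ,
      (∀ p, 0 ≤ γ p) ∧
      (∑ p : (V → Bool) × (V → Bool), γ p = 1) ∧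
      (∀ η, ∑ η' : V → Bool, γ (η, η') = Peps J h β ε σ η) ∧
      (∀ η', ∑ η : V → Bool, γ (η, η') = Peps J h β ε τ η') ∧
      ∑ p : (V → Bool) × (V → Bool),
          γ p * ((univ.filter (fun y => p.1 y ≠ p.2 y)).card : ℝ) ≤
        ((1 - ε) + ε * univ.sup' univ_nonempty (fun u => ∑ y, Real.tanh (β * |J u y| / 2))) *
          ((univ.filter (fun y => σ y ≠ τ y)).card : ℝ) := by
  obtain ⟨hε0, hε1⟩ := hε
  set μ : V → Bool → ℝ := fun x => qf J h β ε σ x with hμ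
  set ν : V → Bool → ℝ := fun x => qf J h β ε τ x with hν
  have hμ0 : ∀ x b, 0 ≤ μ x b := fun x b => qf_nonneg J h β ⟨hε0, hε1⟩ σ x b
  have hν0 : ∀ x b, 0 ≤ ν x b := fun x b => qf_nonneg J h β ⟨hε0, hε1⟩ τ x b
  have hμ1 : ∀ x, μ x true + μ x false = 1 := fun x => qf_sum J h β ε σ x
  have hν1 : ∀ x, ν x true + ν x false = 1 := fun x => qf_sum J h β ε τ x
  set c : V → Bool × Bool → ℝ := fun x => cpl (μ x) (ν x) with hc
  set γ : (V → Bool) × (V → Bool) → ℝ := fun p => ∏ x, c x (p.1 x, p.2 x) with hγ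
  have hrow : ∀ η : V → Bool, (∑ η' : V → Bool, γ (η, η')) = ∏ x, μ x (η x) := by
    intro η
    calc ∑ η' : V → Bool, ∏ x, c x (η x, η' x)
        = ∏ x, ∑ b, c x (η x, b) := (Fintype.prod_sum fun x b => c x (η x, b)).symm
      _ = ∏ x, μ x (η x) := Finset.prod_congr rfl fun x _ => cpl_row _ _ (hμ1 x) (hν1 x) _
  have hcol : ∀ η' : V → Bool, (∑ η : V → Bool, γ (η, η')) = ∏ x, ν x (η' x) := by
    intro η'
    calc ∑ η : V → Bool, ∏ x, c x (η x, η' x)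
        = ∏ x, ∑ b, c x (b, η' x) := (Fintype.prod_sum fun x b => c x (b, η' x)).symm
      _ = ∏ x, ν x (η' x) := Finset.prod_congr rfl fun x _ => cpl_col _ _ (hμ1 x) (hν1 x) _
  refine ⟨γ, ?_, ?_, ?_, ?_, ?_⟩
  · intro p
    exact Finset.prod_nonneg fun x _ => cpl_nonneg _ _ (hμ0 x) (hν0 x) _
  · rw [Fintype.sum_prod_type]
    calc ∑ η : V → Bool, ∑ η' : V → Bool, γ (η, η')
        = ∑ η : V → Bool, ∏ x, μ x (η x) := Finset.sum_congr rfl fun η _ => hrow η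
      _ = ∏ x, ∑ b, μ x b := (Fintype.prod_sum μ).symm
      _ = 1 := by
          rw [show (∏ x, ∑ b, μ x b) = ∏ x : V, (1:ℝ) from
            Finset.prod_congr rfl fun x _ => by rw [Fintype.sum_bool]; exact hμ1 x]
          simp
  · intro η
    rw [hrow η, Peps_eq_prod]
  · intro η'
    rw [hcol η', Peps_eq_prod]
  · set D := univ.filter (fun y => σ y ≠ τ y) with hD
    set M := univ.sup' univ_nonempty (fun u => ∑ y, Real.tanh (β * |J u y| / 2)) with hM
    have hcard : ∀ (f g : V → Bool),
        ((univ.filter (fun y => f y ≠ g y)).card : ℝ)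
          = ∑ y, (if f y = g y then (0:ℝ) else 1) := by
      intro f g
      rw [Finset.card_filter]
      push_cast
      exact Finset.sum_congr rfl fun y _ => by by_cases hfg : f y = g y <;> simp [hfg]
    have key : ∀ y : V,
        (∑ p : (V → Bool) × (V → Bool), γ p * (if p.1 y = p.2 y then (0:ℝ) else 1))
          = |μ y true - ν y true| := by
      intro y
      set E : V → Bool × Bool → ℝ :=
        fun x q => c x q * (if x = y then (if q.1 = q.2 then (0:ℝ) else 1) else 1) with hE
      have step1 : (∑ p : (V → Bool) × (V → Bool), γ p * (if p.1 y = p.2 y then (0:ℝ) else 1))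
          = ∑ g : V → Bool × Bool, ∏ x, E x (g x) := by
        refine (Fintype.sum_equiv (Equiv.arrowProdEquivProdArrow V (fun _ => Bool) (fun _ => Bool))
          (fun g => ∏ x, E x (g x))
          (fun p => γ p * (if p.1 y = p.2 y then (0:ℝ) else 1)) ?_).symm
        intro g
        simp only [hE, hγ]
        rw [Finset.prod_mul_distrib]
        simp only [Equiv.arrowProdEquivProdArrow, Equiv.coe_fn_mk, Prod.mk.eta]
        rw [Finset.prod_ite_eq' univ y (fun x => if (g x).1 = (g x).2 then (0:ℝ) else 1)]
        simp
        have gen : ∀ (A : Prop) (i1 i2 : Decidable A) (P : ℝ),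
            @ite ℝ A i1 0 P = P * @ite ℝ A i2 0 1 := by
          intro A i1 i2 P
          by_cases hA : A <;> simp [hA]
        exact gen _ _ _ _
      have step2 : (∑ g : V → Bool × Bool, ∏ x, E x (g x)) = ∏ x, ∑ q, E x q :=
        (Fintype.prod_sum E).symm
      have step3 : ∀ x, (∑ q : Bool × Bool, E x q)
          = if x = y then |μ y true - ν y true| else 1 := by
        intro x
        by_cases hxy : x = y
        · subst hxy
          rw [if_pos rfl]
          have e3 : (∑ q : Bool × Bool, E x q) = c x (true, false) + c x (false, true) := by
            simp only [hE, if_pos rfl]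
            rw [Fintype.sum_prod_type, Fintype.sum_bool, Fintype.sum_bool, Fintype.sum_bool]
            norm_num
          rw [e3]
          exact cpl_dis (μ x) (ν x)
        · rw [if_neg hxy]
          simp only [hE, if_neg hxy, mul_one]
          exact cpl_total _ _ (hμ1 x) (hν1 x)
      have step4 : (∏ x, ∑ q, E x q) = |μ y true - ν y true| := by
        rw [show (∏ x, ∑ q, E x q)
            = ∏ x, (if x = y then |μ y true - ν y true| else 1) from
          Finset.prod_congr rfl fun x _ => step3 x]
        rw [Finset.prod_ite_eq' univ y (fun _ => |μ y true - ν y true|)]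
        simp
      rw [step1, step2, step4]
    have lhs_eq : (∑ p : (V → Bool) × (V → Bool),
          γ p * ((univ.filter (fun y => p.1 y ≠ p.2 y)).card : ℝ))
        = ∑ y : V, |μ y true - ν y true| := by
      calc ∑ p : (V → Bool) × (V → Bool),
            γ p * ((univ.filter (fun y => p.1 y ≠ p.2 y)).card : ℝ)
          = ∑ p : (V → Bool) × (V → Bool),
              ∑ y : V, γ p * (if p.1 y = p.2 y then (0:ℝ) else 1) := by
            refine Finset.sum_congr rfl fun p _ => ?_
            rw [hcard p.1 p.2, Finset.mul_sum]
        _ = ∑ y : V, ∑ p : (V → Bool) × (V → Bool),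
              γ p * (if p.1 y = p.2 y then (0:ℝ) else 1) := Finset.sum_comm
        _ = ∑ y : V, |μ y true - ν y true| := Finset.sum_congr rfl fun y _ => key y
    rw [lhs_eq]
    have hbound : ∀ y : V, |μ y true - ν y true| ≤
        (1 - ε) * (if σ y = τ y then (0:ℝ) else 1)
          + ε * ∑ z ∈ D, Real.tanh (β * |J y z| / 2) :=
      fun y => tv_bound J h hβ ⟨hε0, hε1⟩ σ τ y
    calc ∑ y : V, |μ y true - ν y true|
        ≤ ∑ y : V, ((1 - ε) * (if σ y = τ y then (0:ℝ) else 1)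
            + ε * ∑ z ∈ D, Real.tanh (β * |J y z| / 2)) :=
          Finset.sum_le_sum fun y _ => hbound y
      _ = (1 - ε) * (D.card : ℝ)
            + ε * ∑ y : V, ∑ z ∈ D, Real.tanh (β * |J y z| / 2) := by
          rw [Finset.sum_add_distrib, ← Finset.mul_sum, ← Finset.mul_sum, ← hcard σ τ, hD]
      _ ≤ (1 - ε) * (D.card : ℝ) + ε * ((D.card : ℝ) * M) := by
          have hswap : ∑ y : V, ∑ z ∈ D, Real.tanh (β * |J y z| / 2)
              = ∑ z ∈ D, ∑ y : V, Real.tanh (β * |J z y| / 2) := by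
            rw [Finset.sum_comm]
            exact Finset.sum_congr rfl fun z _ =>
              Finset.sum_congr rfl fun y _ => by rw [hsym y z]
          have hsup : ∀ z : V, (∑ y : V, Real.tanh (β * |J z y| / 2)) ≤ M :=
            fun z => hM ▸ Finset.le_sup' (fun u => ∑ y : V, Real.tanh (β * |J u y| / 2)) (mem_univ z)
          have h7 : ∑ z ∈ D, ∑ y : V, Real.tanh (β * |J z y| / 2) ≤ (D.card : ℝ) * M := by
            calc ∑ z ∈ D, ∑ y : V, Real.tanh (β * |J z y| / 2)
                ≤ ∑ _z ∈ D, M := Finset.sum_le_sum fun z _ => hsup z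
              _ = (D.card : ℝ) * M := by rw [Finset.sum_const, nsmul_eq_mul]
          have := mul_le_mul_of_nonneg_left (hswap ▸ h7) (le_of_lt hε0)
          linarith
      _ = ((1 - ε) + ε * M) * (D.card : ℝ) := by ring
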